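/- Connected components decomposition: let D be a polyhedra system and Sing(D) = ∪_α C_α the decomposition of its singular locus into connected components (for the subspace Zariski topology on H). If for each α the reduction Red_{C_α}(D) admits a reduction of singularities, then D admits a reduction of singularities. -/
import Mathlib


open scoped Pointwise

namespace RedSing

/-! ### Vectors and polyhedra.
A vector "in `ℝ^J`" is a function `ℕ → ℝ` supported on the finite set `J`. -/

abbrev Vec : Type := ℕ → ℝ

/-- The cone `ℝ_{≥0}^J` of nonnegative vectors supported on `J`. -/
def suppCone (J : Finset ℕ) : Set Vec :=
  {σ | (∀ j, 0 ≤ σ j) ∧ ∀ j, j ∉ J → σ j = 0}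

/-- Positive convex hull `[[A]] = convexHull (A + ℝ_{≥0}^J)`. -/
noncomputable def posHull (J : Finset ℕ) (A : Set Vec) : Set Vec :=
  convexHull ℝ (A + suppCone J)

/-- The lattice points `(1/d)·ℤ_{≥0}^J`. -/
def latticePts (J : Finset ℕ) (d : ℕ) : Set Vec :=
  {σ | σ ∈ suppCone J ∧ ∀ j, ∃ m : ℕ, σ j = (m : ℝ) / (d : ℝ)}

/-- `Δ ⊆ ℝ_{≥0}^J` is a characteristic polyhedron with denominator `d`. -/
def IsCharPoly (J : Finset ℕ) (d : ℕ) (Δ : Set Vec) : Prop :=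
  ∃ A, A ⊆ latticePts J d ∧ Δ = posHull J A

/-! ### Support fabrics -/

/-- A support fabric: a nonempty finite index set `I` together with a
downward-closed family `H` of subsets of `I` (the strata). -/
structure Fabric where
  I : Finset ℕ
  I_nonempty : I.Nonempty
  H : Set (Finset ℕ)
  mem_sub : ∀ J ∈ H, J ⊆ I
  downward : ∀ J ∈ H, ∀ J' ⊆ J, J' ∈ H

/-- Dimension of a support fabric: the maximal cardinality of a stratum. -/
noncomputable def Fabric.dim (F : Fabric) : ℕ :=
  sSup {n | ∃ J ∈ F.H, J.card = n}

/-- The Zariski topology on finsets: the open sets are the downward-closed families;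
subsets such as the strata set `H` carry the subspace topology. -/
instance zariskiTopology : TopologicalSpace (Finset ℕ) where
  IsOpen U := ∀ J ∈ U, ∀ J' ⊆ J, J' ∈ U
  isOpen_univ := fun J _ J' _ => Set.mem_univ J'
  isOpen_inter := fun s t hs ht J hJ J' hJ' => ⟨hs J hJ.1 J' hJ', ht J hJ.2 J' hJ'⟩
  isOpen_sUnion := fun S hS J hJ J' hJ' => by
    obtain ⟨t, htS, hJt⟩ := hJ
    exact ⟨t, htS, hS t htS J hJt J' hJ'⟩

/-! ### Polyhedra systems -/

/-- A polyhedra system over a support fabric: a nonempty characteristic polyhedron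
with denominator `d` for each stratum, compatible with the projections
(restriction of functions). -/
structure PolySys where
  F : Fabric
  d : ℕ
  d_pos : 0 < d
  Δ : Finset ℕ → Set Vec
  char : ∀ J ∈ F.H, IsCharPoly J d (Δ J)
  nonempty : ∀ J ∈ F.H, (Δ J).Nonempty
  compat : ∀ J₁ ∈ F.H, ∀ J₂ ∈ F.H, J₁ ⊆ J₂ →
    Δ J₁ = (fun σ => fun j => if j ∈ J₁ then σ j else 0) '' Δ J₂

/-- Contact exponent `δ(Δ) = min {|σ| : σ ∈ Δ}` (with the convention `δ = -1`
for the empty index set). -/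
noncomputable def contactExp (J : Finset ℕ) (Δ : Set Vec) : ℝ :=
  if J = (∅ : Finset ℕ) then -1 else sInf ((fun σ => ∑ j ∈ J, σ j) '' Δ)

/-- Singular locus: strata with contact exponent at least 1. -/
def Sing (D : PolySys) : Set (Finset ℕ) :=
  {J | J ∈ D.F.H ∧ 1 ≤ contactExp J (D.Δ J)}

/-- `D` is special: `δ(D) = max {δ(Δ_J)} = 1`. -/
def IsSpecial (D : PolySys) : Prop :=
  (∀ J ∈ D.F.H, contactExp J (D.Δ J) ≤ 1) ∧ ∃ J ∈ D.F.H, contactExp J (D.Δ J) = 1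

/-! ### Blow-ups and transforms -/

/-- The strata of the blow-up centered in `J`, with new index `inf` (playing `∞`). -/
def blowupH (H : Set (Finset ℕ)) (J : Finset ℕ) (inf : ℕ) : Set (Finset ℕ) :=
  {K | K ∈ H ∧ ¬ J ⊆ K} ∪
    {J' | ∃ K, (K ∈ H ∧ J ⊆ K) ∧ ∃ A, A ⊂ J ∧ J' = (K \ J) ∪ A ∪ {inf}}

/-- The map `π_J^#` from the strata of the blow-up to the strata of `F`. -/
def blowdown (J : Finset ℕ) (inf : ℕ) (J' : Finset ℕ) : Finset ℕ :=
  if inf ∈ J' then (J'.erase inf) ∪ J else J'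

/-- The map `λ_{J'} : ℝ^K → ℝ^{J'}`. -/
noncomputable def lamMap (J J' : Finset ℕ) (inf : ℕ) (σ : Vec) : Vec :=
  fun j => if j = inf then ∑ i ∈ J, σ i else if j ∈ J' then σ j else 0

/-- The indicator vector `e_{J',∞}` of the new index. -/
def eVec (inf : ℕ) : Vec := fun j => if j = inf then 1 else 0

/-- The polyhedron `Δ⁰_{J'}` of the total transform at a stratum `J'` of the blow-up. -/
noncomputable def totalΔ (D : PolySys) (J : Finset ℕ) (inf : ℕ) (J' : Finset ℕ) : Set Vec :=
  if inf ∈ J' then posHull J' (lamMap J J' inf '' D.Δ (blowdown J inf J'))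
  else D.Δ J'

/-- The polyhedron `Δ'_{J'} = Δ⁰_{J'} - e_{J',∞}` of the characteristic transform
(`e_{J',∞} = 0` when `∞ ∉ J'`). -/
noncomputable def charΔ (D : PolySys) (J : Finset ℕ) (inf : ℕ) (J' : Finset ℕ) : Set Vec :=
  if inf ∈ J' then
    (fun σ => σ - eVec inf) '' posHull J' (lamMap J J' inf '' D.Δ (blowdown J inf J'))
  else D.Δ J'

/-- `D'` is the total transform `Λ⁰_J(D)` of `D` centered in the nonempty stratum `J`,
with new index `inf`. -/
def IsTotalTransformAt (D D' : PolySys) (J : Finset ℕ) (inf : ℕ) : Prop :=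
  J ∈ D.F.H ∧ J ≠ ∅ ∧ D'.d = D.d ∧ inf ∉ D.F.I ∧
  D'.F.I = insert inf D.F.I ∧ D'.F.H = blowupH D.F.H J inf ∧
  ∀ J' ∈ D'.F.H, D'.Δ J' = totalΔ D J inf J'

/-- `D'` is a total transform of `D` centered in `J`. -/
def IsTotalTransform (D D' : PolySys) (J : Finset ℕ) : Prop :=
  ∃ inf, IsTotalTransformAt D D' J inf

/-- `D'` is the characteristic transform `Λ_J(D)` of `D` centered in the singular
stratum `J`, with new index `inf`. -/
def IsCharTransformAt (D D' : PolySys) (J : Finset ℕ) (inf : ℕ) : Prop :=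
  J ∈ Sing D ∧ D'.d = D.d ∧ inf ∉ D.F.I ∧
  D'.F.I = insert inf D.F.I ∧ D'.F.H = blowupH D.F.H J inf ∧
  ∀ J' ∈ D'.F.H, D'.Δ J' = charΔ D J inf J'

/-- `D'` is a characteristic transform of `D` centered in `J`. -/
def IsCharTransform (D D' : PolySys) (J : Finset ℕ) : Prop :=
  ∃ inf, IsCharTransformAt D D' J inf

/-- A reduction of singularities of `D`: a finite sequence of characteristic
transforms, each centered in a singular stratum of the previous system, ending
in a system with empty singular locus. -/
def HasReduction (D : PolySys) : Prop :=
  ∃ (k : ℕ) (seq : ℕ → PolySys), seq 0 = D ∧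
    (∀ i, i < k → ∃ J, IsCharTransform (seq i) (seq (i + 1)) J) ∧
    Sing (seq k) = ∅

/-! ### Strict tangent space and maximal contact -/

/-- Hironaka's strict tangent space `T(Δ)` of a polyhedron `Δ ⊆ ℝ_{≥0}^J`. -/
def strictTangent (J : Finset ℕ) (Δ : Set Vec) : Set ℕ :=
  {j | ∃ σ ∈ Δ, (∑ i ∈ J, σ i) = 1 ∧ σ j ≠ 0}

/-- The stratum `T` has maximal contact with the (special) system `D`. -/
def HasMaximalContact (D : PolySys) (T : Finset ℕ) : Prop :=
  T ∈ D.F.H ∧ ∀ J ∈ Sing D, (↑T : Set ℕ) ⊆ strictTangent J (D.Δ J)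

/-! ### Hironaka's projection from a stratum `T` -/

/-- Hironaka's projection `∇_J^T(σ) = σ|_{J∖T} / (1 - Σ_{j∈T} σ(j))`. -/
noncomputable def hironakaProj (T J : Finset ℕ) (σ : Vec) : Vec :=
  fun j => if j ∈ J \ T then σ j / (1 - ∑ i ∈ T, σ i) else 0

/-- The polyhedron `Δ^T_{J*} = ∇_J^T(Δ_J ∩ M_J^T)` of Hironaka's projection,
where `J = J* ∪ T`. -/
noncomputable def projΔ (D : PolySys) (T J' : Finset ℕ) : Set Vec :=
  hironakaProj T (J' ∪ T) '' {σ | σ ∈ D.Δ (J' ∪ T) ∧ (∑ i ∈ T, σ i) < 1}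

/-- The strata `H^T = {J ∖ T : T ⊆ J ∈ H}` of the projected fabric `F^T`. -/
def projH (F : Fabric) (T : Finset ℕ) : Set (Finset ℕ) :=
  {J' | ∃ J, (J ∈ F.H ∧ T ⊆ J) ∧ J' = J \ T}

/-- The singular locus of Hironaka's projection `D^T`. -/
def projSing (D : PolySys) (T : Finset ℕ) : Set (Finset ℕ) :=
  {J' | J' ∈ projH D.F T ∧ (projΔ D T J').Nonempty ∧ 1 ≤ contactExp J' (projΔ D T J')}

/-- `E` is Hironaka's projection `D^T` of `D` from the stratum `T`
(a polyhedra system over `F^T` with denominator `d!·d`). -/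
def IsHironakaProjection (D E : PolySys) (T : Finset ℕ) : Prop :=
  E.F.I = D.F.I \ T ∧ E.F.H = projH D.F T ∧ E.d = Nat.factorial D.d * D.d ∧
  ∀ J' ∈ E.F.H, E.Δ J' = projΔ D T J'

/-! ### Reduction `Red_C` of a system to a closed set `C` of strata -/

/-- The fabric `Red_C(F)`, with strata `H_C = ⋃_{J ∈ C} P(J)`. -/
def Fabric.red (F : Fabric) (C : Set (Finset ℕ)) : Fabric where
  I := F.I
  I_nonempty := F.I_nonempty
  H := {J' | ∃ J, (J ∈ C ∧ J ∈ F.H) ∧ J' ⊆ J}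
  mem_sub := by
    rintro J' ⟨J, ⟨_, hJH⟩, hsub⟩
    exact hsub.trans (F.mem_sub J hJH)
  downward := by
    rintro J' ⟨J, hJ, hsub⟩ J'' hsub'
    exact ⟨J, hJ, hsub'.trans hsub⟩

/-- The reduction `Red_C(D)` of a polyhedra system to a closed set `C ⊆ H`. -/
noncomputable def PolySys.red (D : PolySys) (C : Set (Finset ℕ)) : PolySys where
  F := D.F.red C
  d := D.d
  d_pos := D.d_pos
  Δ := D.Δ
  char := by
    rintro J ⟨K, ⟨_, hK⟩, hsub⟩
    exact D.char J (D.F.downward K hK J hsub)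
  nonempty := by
    rintro J ⟨K, ⟨_, hK⟩, hsub⟩
    exact D.nonempty J (D.F.downward K hK J hsub)
  compat := by
    rintro J₁ ⟨K₁, ⟨_, hK₁⟩, h₁⟩ J₂ ⟨K₂, ⟨_, hK₂⟩, h₂⟩ h12
    exact D.compat J₁ (D.F.downward K₁ hK₁ J₁ h₁) J₂ (D.F.downward K₂ hK₂ J₂ h₂) h12

/-- A special polyhedra system is consistent if for each connected component `C`
of its singular locus there is a stratum having maximal contact with `Red_C(D)`
(non-singular systems are consistent by convention). -/
def IsConsistent (D : PolySys) : Prop :=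
  ∀ x ∈ Sing D, ∃ T, HasMaximalContact (D.red (connectedComponentIn (Sing D) x)) T

/-! ### Fitting and Spivakovsky's invariant -/

/-- The fitting vector `w_Δ(j) = min {σ(j) : σ ∈ Δ}`. -/
noncomputable def fitVec (Δ : Set Vec) : Vec := fun j => sInf ((fun σ => σ j) '' Δ)

/-- The fitting `Δ̃ = Δ - w_Δ`. -/
noncomputable def fitting (Δ : Set Vec) : Set Vec := (fun σ => σ - fitVec Δ) '' Δ

/-- Spivakovsky's invariant `Spi_D = max {δ(Δ̃_J) : J ∈ Sing(D)}`. -/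
noncomputable def spi (D : PolySys) : ℝ :=
  sSup {x | ∃ J ∈ Sing D, contactExp J (fitting (D.Δ J)) = x}

/-- `S(D) = {J ∈ Sing(D) : δ(Δ̃_J) = Spi_D}`. -/
def SSet (D : PolySys) : Set (Finset ℕ) :=
  {J | J ∈ Sing D ∧ contactExp J (fitting (D.Δ J)) = spi D}

/-! ### Moderated transforms, normal crossings, quasi-ordinary systems -/

/-- The polyhedron of the `d`-moderated transform `Θ^d_J(N) = N(Λ_J(N/d))`
at a stratum `J'` of the blow-up. -/
noncomputable def modΔ (N : PolySys) (d : ℕ) (J : Finset ℕ) (inf : ℕ) (J' : Finset ℕ) :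
    Set Vec :=
  if inf ∈ J' then
    (fun σ => σ - (d : ℝ) • eVec inf) ''
      posHull J' (lamMap J J' inf '' N.Δ (blowdown J inf J'))
  else N.Δ J'

/-- `N'` is the `d`-moderated transform `Θ^d_J(N)` of the Newton polyhedra system `N`
centered in a stratum `J` with `δ(N_J) ≥ d`, with new index `inf`. -/
def IsModTransformAt (N N' : PolySys) (d : ℕ) (J : Finset ℕ) (inf : ℕ) : Prop :=
  N.d = 1 ∧ N'.d = 1 ∧ J ∈ N.F.H ∧ (d : ℝ) ≤ contactExp J (N.Δ J) ∧ inf ∉ N.F.I ∧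
  N'.F.I = insert inf N.F.I ∧ N'.F.H = blowupH N.F.H J inf ∧
  ∀ J' ∈ N'.F.H, N'.Δ J' = modΔ N d J inf J'

/-- `N'` is a `d`-moderated transform of `N` centered in `J`. -/
def IsModTransform (N N' : PolySys) (d : ℕ) (J : Finset ℕ) : Prop :=
  ∃ inf, IsModTransformAt N N' d J inf

/-- A Newton polyhedra system has normal crossings if each polyhedron has a
single vertex. -/
def HasNormalCrossings (D : PolySys) : Prop :=
  ∀ J ∈ D.F.H, ∃ σ, D.Δ J = posHull J {σ}

/-- `D` is Hironaka quasi-ordinary: each polyhedron over a singular stratum has a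
single vertex. -/
def IsQuasiOrdinary (D : PolySys) : Prop :=
  ∀ J ∈ Sing D, ∃ σ, D.Δ J = posHull J {σ}

/-! ### Lexicographic order on sequences of naturals -/

/-- Strict lexicographic order on sequences `ℕ → ℕ`. -/
def LexLt (φ ψ : ℕ → ℕ) : Prop := ∃ n, φ n < ψ n ∧ ∀ m < n, φ m = ψ m

/-- A weakly decreasing sequence of naturals. -/
def WeaklyDecr (φ : ℕ → ℕ) : Prop := ∀ n, φ (n + 1) ≤ φ n

/-! ### Auxiliary development for the proof -/

section Aux

/-- Restriction of a vector to a finset (Hironaka projection to a face). -/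
noncomputable def restr (J : Finset ℕ) (σ : Vec) : Vec :=
  fun j => if j ∈ J then σ j else 0

lemma suppCone_convex (J : Finset ℕ) : Convex ℝ (suppCone J) := by
  intro σ hσ τ hτ a b ha hb hab
  refine ⟨fun j => ?_, fun j hj => ?_⟩
  · have h1 := hσ.1 j; have h2 := hτ.1 j
    have : 0 ≤ a * σ j + b * τ j := by positivity
    simpa [smul_eq_mul] using this
  · simp [hσ.2 j hj, hτ.2 j hj]

lemma zero_mem_suppCone (J : Finset ℕ) : (0 : Vec) ∈ suppCone J :=
  ⟨fun _ => le_refl 0, fun _ _ => rfl⟩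

lemma suppCone_add (J : Finset ℕ) : suppCone J + suppCone J = suppCone J := by
  apply Set.Subset.antisymm
  · rintro x ⟨σ, hσ, τ, hτ, rfl⟩
    exact ⟨fun j => add_nonneg (hσ.1 j) (hτ.1 j),
      fun j hj => by simp [hσ.2 j hj, hτ.2 j hj]⟩
  · intro σ hσ
    exact ⟨σ, hσ, 0, zero_mem_suppCone J, add_zero σ⟩

lemma posHull_eq (J : Finset ℕ) (S : Set Vec) :
    posHull J S = convexHull ℝ S + suppCone J := by
  rw [posHull, convexHull_add, (suppCone_convex J).convexHull_eq]

lemma subset_posHull (J : Finset ℕ) (S : Set Vec) : S ⊆ posHull J S := by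
  intro σ hσ
  have : σ + 0 ∈ S + suppCone J := Set.add_mem_add hσ (zero_mem_suppCone J)
  rw [add_zero] at this
  exact subset_convexHull ℝ _ this

lemma posHull_add_suppCone (J : Finset ℕ) (S : Set Vec) :
    posHull J S + suppCone J = posHull J S := by
  rw [posHull_eq, add_assoc, suppCone_add]

lemma IsCharPoly.convex {J d Δ} (h : IsCharPoly J d Δ) : Convex ℝ Δ := by
  obtain ⟨A, -, rfl⟩ := h
  exact convex_convexHull ℝ _

lemma IsCharPoly.subset_suppCone {J d Δ} (h : IsCharPoly J d Δ) : Δ ⊆ suppCone J := by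
  obtain ⟨A, hA, rfl⟩ := h
  refine convexHull_min ?_ (suppCone_convex J)
  have : A + suppCone J ⊆ suppCone J + suppCone J :=
    Set.add_subset_add (fun a ha => (hA ha).1) subset_rfl
  rwa [suppCone_add J] at this

lemma IsCharPoly.add_suppCone {J d Δ} (h : IsCharPoly J d Δ) :
    Δ + suppCone J = Δ := by
  obtain ⟨A, -, rfl⟩ := h
  exact posHull_add_suppCone J A

lemma PolySys.delta_supp (D : PolySys) {J} (hJ : J ∈ D.F.H) :
    D.Δ J ⊆ suppCone J :=
  (D.char J hJ).subset_suppCone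

end Aux

section Aux2

lemma sing_sum_lb {D : PolySys} {J} (hJ : J ∈ Sing D) {σ} (hσ : σ ∈ D.Δ J) :
    1 ≤ ∑ j ∈ J, σ j := by
  obtain ⟨hJH, hce⟩ := hJ
  rcases eq_or_ne J ∅ with rfl | hne
  · rw [contactExp, if_pos rfl] at hce; linarith
  · rw [contactExp, if_neg hne] at hce
    refine le_trans hce (csInf_le ⟨0, ?_⟩ ⟨σ, hσ, rfl⟩)
    rintro y ⟨τ, hτ, rfl⟩
    exact Finset.sum_nonneg fun j _ => ((D.delta_supp hJH) hτ).1 j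

lemma sing_ne_empty {D : PolySys} {J} (hJ : J ∈ Sing D) : J ≠ ∅ := by
  rintro rfl
  have := hJ.2
  rw [contactExp, if_pos rfl] at this
  linarith

lemma sing_mono (D : PolySys) {J K} (hJ : J ∈ Sing D) (hK : K ∈ D.F.H)
    (hJK : J ⊆ K) : K ∈ Sing D := by
  refine ⟨hK, ?_⟩
  have hKne : K ≠ ∅ := by
    rintro rfl
    exact sing_ne_empty hJ (Finset.subset_empty.mp hJK)
  rw [contactExp, if_neg hKne]
  refine le_csInf ((D.nonempty K hK).image _) ?_
  rintro y ⟨σ, hσ, rfl⟩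
  have hproj : restr J σ ∈ D.Δ J := by
    rw [D.compat J hJ.1 K hK hJK]
    exact ⟨σ, hσ, rfl⟩
  calc (1 : ℝ) ≤ ∑ j ∈ J, restr J σ j := sing_sum_lb hJ hproj
    _ = ∑ j ∈ J, σ j := Finset.sum_congr rfl fun j hj => by simp [restr, hj]
    _ ≤ ∑ j ∈ K, σ j := Finset.sum_le_sum_of_subset_of_nonneg hJK
        (fun j _ _ => ((D.delta_supp hK) hσ).1 j)

/-! #### Blowup combinatorics -/

lemma mem_blowupH_of_not_inf {H : Set (Finset ℕ)} {J J' : Finset ℕ} {inf : ℕ}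
    (h : J' ∈ blowupH H J inf) (hinf : inf ∉ J') : J' ∈ H ∧ ¬J ⊆ J' := by
  rcases h with h | ⟨K, _, A, _, rfl⟩
  · exact h
  · exact absurd (by simp) hinf

lemma blowdown_eq {J K A : Finset ℕ} {inf : ℕ} (hinfK : inf ∉ K) (hAJ : A ⊆ J)
    (hJK : J ⊆ K) : blowdown J inf (K \ J ∪ A ∪ {inf}) = K := by
  rw [blowdown, if_pos (by simp)]
  ext x
  simp only [Finset.mem_union, Finset.mem_erase, Finset.mem_sdiff,
    Finset.mem_singleton]
  constructor
  · rintro (⟨hne, (⟨h1, _⟩ | h2) | h3⟩ | h4)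
    · exact h1
    · exact hJK (hAJ h2)
    · exact absurd h3 hne
    · exact hJK h4
  · intro hx
    by_cases hxJ : x ∈ J
    · exact Or.inr hxJ
    · exact Or.inl ⟨fun h => hinfK (h ▸ hx), Or.inl (Or.inl ⟨hx, hxJ⟩)⟩

lemma blowdown_mem {H : Set (Finset ℕ)} {J J' : Finset ℕ} {inf : ℕ}
    (hstr : ∀ M ∈ H, inf ∉ M) (h : J' ∈ blowupH H J inf) (hmem : inf ∈ J') :
    blowdown J inf J' ∈ H ∧ J ⊆ blowdown J inf J' ∧
      J'.erase inf ⊆ blowdown J inf J' := by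
  rcases h with h | ⟨K, ⟨hKH, hJK⟩, A, hA, rfl⟩
  · exact absurd hmem (hstr _ h.1)
  · rw [blowdown_eq (hstr K hKH) hA.subset hJK]
    refine ⟨hKH, hJK, ?_⟩
    intro x hx
    simp only [Finset.mem_erase, Finset.mem_union, Finset.mem_sdiff,
      Finset.mem_singleton] at hx
    rcases hx with ⟨hne, (⟨h1, _⟩ | h2) | h3⟩
    · exact h1
    · exact hJK (hA.subset h2)
    · exact absurd h3 hne

lemma blowupH_subset_of_subset {H H' : Set (Finset ℕ)} {J : Finset ℕ} {inf : ℕ}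
    (h : H ⊆ H') : blowupH H J inf ⊆ blowupH H' J inf := by
  rintro J' (⟨h1, h2⟩ | ⟨K, ⟨hK, hJK⟩, A, hA, rfl⟩)
  · exact Or.inl ⟨h h1, h2⟩
  · exact Or.inr ⟨K, ⟨h hK, hJK⟩, A, hA, rfl⟩

end Aux2

section Aux3

/-- `restr` as a linear map. -/
noncomputable def restrLin (J : Finset ℕ) : Vec →ₗ[ℝ] Vec where
  toFun := restr J
  map_add' σ τ := by funext j; by_cases h : j ∈ J <;> simp [restr, h]
  map_smul' a σ := by funext j; by_cases h : j ∈ J <;> simp [restr, h]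

/-- `lamMap` as a linear map. -/
noncomputable def lamLin (J J' : Finset ℕ) (inf : ℕ) : Vec →ₗ[ℝ] Vec where
  toFun := lamMap J J' inf
  map_add' σ τ := by
    funext j
    by_cases h : j = inf
    · simp [lamMap, h, Finset.sum_add_distrib]
    · by_cases h' : j ∈ J' <;> simp [lamMap, h, h']
  map_smul' a σ := by
    funext j
    by_cases h : j = inf
    · simp [lamMap, h, Finset.mul_sum]
    · by_cases h' : j ∈ J' <;> simp [lamMap, h, h']

lemma restr_eq_fun (J : Finset ℕ) :
    (fun σ : Vec => fun j => if j ∈ J then σ j else 0) = restr J := rfl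

lemma sub_image (e : Vec) (X : Set Vec) :
    (fun σ => σ - e) '' X = X + {-e} := by
  rw [Set.add_singleton]
  exact Set.image_congr fun σ _ => sub_eq_add_neg σ e

lemma lin_image_add (f : Vec →ₗ[ℝ] Vec) (S T : Set Vec) :
    f '' (S + T) = f '' S + f '' T :=
  Set.image_add f

lemma lam_image_suppCone {J J' : Finset ℕ} {inf : ℕ} (hmem : inf ∈ J')
    (K : Finset ℕ) : lamMap J J' inf '' suppCone K ⊆ suppCone J' := by
  rintro _ ⟨σ, hσ, rfl⟩
  constructor
  · intro j
    by_cases h : j = inf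
    · simp only [lamMap, h, if_pos]
      exact Finset.sum_nonneg fun i _ => hσ.1 i
    · by_cases h' : j ∈ J' <;> simp [lamMap, h, h', hσ.1 j]
  · intro j hj
    have : j ≠ inf := fun h => hj (h ▸ hmem)
    simp [lamMap, this, hj]

lemma restr_image_suppCone {J₁ J₂ : Finset ℕ} (h : J₁ ⊆ J₂) :
    restr J₁ '' suppCone J₂ = suppCone J₁ := by
  apply Set.Subset.antisymm
  · rintro _ ⟨σ, hσ, rfl⟩
    constructor
    · intro j; by_cases hj : j ∈ J₁ <;> simp [restr, hj, hσ.1 j]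
    · intro j hj; simp [restr, hj]
  · intro σ hσ
    have hsupp : σ ∈ suppCone J₂ :=
      ⟨hσ.1, fun j hj => hσ.2 j fun hj' => hj (h hj')⟩
    refine ⟨σ, hsupp, ?_⟩
    funext j
    by_cases hj : j ∈ J₁
    · simp [restr, hj]
    · simp [restr, hj, hσ.2 j hj]

end Aux3

section Aux4

lemma lamLin_coe (J J' : Finset ℕ) (inf : ℕ) :
    ⇑(lamLin J J' inf) = lamMap J J' inf := rfl

lemma restrLin_coe (J : Finset ℕ) : ⇑(restrLin J) = restr J := rfl

lemma add_absorb {X Y : Set Vec} {J' : Finset ℕ}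
    (hY : Y ⊆ suppCone J') (h0 : (0 : Vec) ∈ Y) :
    X + Y + suppCone J' = X + suppCone J' := by
  apply Set.Subset.antisymm
  · rintro _ ⟨_, ⟨a, ha, b, hb, rfl⟩, c, hc, rfl⟩
    exact ⟨a, ha, b + c, (suppCone_add J') ▸ Set.add_mem_add (hY hb) hc,
      (add_assoc a b c).symm⟩
  · rintro _ ⟨a, ha, c, hc, rfl⟩
    exact ⟨a + 0, ⟨a, ha, 0, h0, rfl⟩, c, hc, by rw [add_zero]⟩

lemma charΔ_pos (G : PolySys) {J J' : Finset ℕ} {inf : ℕ} (hmem : inf ∈ J')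
    (hK : blowdown J inf J' ∈ G.F.H) :
    charΔ G J inf J' =
      lamMap J J' inf '' G.Δ (blowdown J inf J') + suppCone J' + {-eVec inf} := by
  have hconv : Convex ℝ (lamMap J J' inf '' G.Δ (blowdown J inf J')) := by
    rw [← lamLin_coe]
    exact (G.char _ hK).convex.linear_image (lamLin J J' inf)
  rw [charΔ, if_pos hmem, sub_image, posHull_eq, hconv.convexHull_eq]

lemma charΔ_isCharPoly (G : PolySys) {J J' : Finset ℕ} {inf : ℕ}
    (hJs : J ∈ Sing G) (hstr : ∀ M ∈ G.F.H, inf ∉ M)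
    (hJ' : J' ∈ blowupH G.F.H J inf) :
    IsCharPoly J' G.d (charΔ G J inf J') := by
  by_cases hmem : inf ∈ J'
  case neg =>
    rw [charΔ, if_neg hmem]
    exact G.char J' (mem_blowupH_of_not_inf hJ' hmem).1
  obtain ⟨hKH, hJK, -⟩ := blowdown_mem hstr hJ' hmem
  set K := blowdown J inf J' with hKdef
  obtain ⟨A, hA, hΔ⟩ := G.char K hKH
  refine ⟨(fun a => lamMap J J' inf a - eVec inf) '' A, ?_, ?_⟩
  · rintro _ ⟨a, haA, rfl⟩
    have haL := hA haA
    have haΔ : a ∈ G.Δ K := by rw [hΔ]; exact subset_posHull K A haA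
    show (lamMap J J' inf a - eVec inf) ∈ latticePts J' G.d
    have hsum : 1 ≤ ∑ j ∈ J, a j := by
      have hproj : restr J a ∈ G.Δ J := by
        rw [G.compat J hJs.1 K hKH hJK, restr_eq_fun]
        exact ⟨a, haΔ, rfl⟩
      calc (1 : ℝ) ≤ ∑ j ∈ J, restr J a j := sing_sum_lb hJs hproj
        _ = ∑ j ∈ J, a j := Finset.sum_congr rfl fun j hj => by simp [restr, hj]
    refine ⟨⟨fun j => ?_, fun j hj => ?_⟩, fun j => ?_⟩
    · by_cases h : j = inf
      · have he : (lamMap J J' inf a - eVec inf) j = (∑ i ∈ J, a i) - 1 := by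
          simp [lamMap, eVec, h]
        rw [he]; linarith
      · by_cases h' : j ∈ J'
        · have he : (lamMap J J' inf a - eVec inf) j = a j := by
            simp [lamMap, eVec, h, h']
          rw [he]; exact haL.1.1 j
        · have he : (lamMap J J' inf a - eVec inf) j = 0 := by
            simp [lamMap, eVec, h, h']
          rw [he]
    · have h : j ≠ inf := fun h => hj (h ▸ hmem)
      simp [lamMap, eVec, h, hj]
    · by_cases h : j = inf
      · choose f hf using haL.2
        have hsum' : ∑ i ∈ J, a i = (∑ i ∈ J, (f i : ℝ)) / (G.d : ℝ) := by
          rw [Finset.sum_div]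
          exact Finset.sum_congr rfl fun i _ => hf i
        have hd : (0 : ℝ) < (G.d : ℝ) := Nat.cast_pos.mpr G.d_pos
        have hdn : (G.d : ℝ) ≤ ∑ i ∈ J, (f i : ℝ) := by
          rw [hsum'] at hsum
          have := (le_div_iff₀ hd).mp hsum
          linarith
        have hdn' : G.d ≤ ∑ i ∈ J, f i := by exact_mod_cast hdn
        refine ⟨(∑ i ∈ J, f i) - G.d, ?_⟩
        have he : (lamMap J J' inf a - eVec inf) j = (∑ i ∈ J, a i) - 1 := by
          simp [lamMap, eVec, h]
        have hc : ((∑ i ∈ J, f i - G.d : ℕ) : ℝ) = (∑ i ∈ J, (f i : ℝ)) - G.d := by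
          rw [Nat.cast_sub hdn']; push_cast; ring
        rw [he, hsum', hc, sub_div, div_self hd.ne']
      · by_cases h' : j ∈ J'
        · have he : (lamMap J J' inf a - eVec inf) j = a j := by
            simp [lamMap, eVec, h, h']
          rw [he]; exact haL.2 j
        · exact ⟨0, by simp [lamMap, eVec, h, h']⟩
  · have hcoeL : ⇑(lamLin J J' inf) = lamMap J J' inf := rfl
    have h0 : (0 : Vec) ∈ lamMap J J' inf '' suppCone K :=
      ⟨0, zero_mem_suppCone K, by rw [← hcoeL, map_zero]⟩
    have hB : (fun a => lamMap J J' inf a - eVec inf) '' A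
        = lamMap J J' inf '' A + {-eVec inf} := by
      rw [← Set.image_image (fun σ => σ - eVec inf) (lamMap J J' inf), sub_image]
    rw [charΔ_pos G hmem hKH]
    calc lamMap J J' inf '' G.Δ K + suppCone J' + {-eVec inf}
        = convexHull ℝ (lamMap J J' inf '' A) + lamMap J J' inf '' suppCone K
            + suppCone J' + {-eVec inf} := by
          rw [hΔ, posHull_eq, ← hcoeL, lin_image_add, LinearMap.image_convexHull]
      _ = convexHull ℝ (lamMap J J' inf '' A) + suppCone J' + {-eVec inf} := by
          rw [add_absorb (lam_image_suppCone hmem K) h0]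
      _ = posHull J' ((fun a => lamMap J J' inf a - eVec inf) '' A) := by
          rw [posHull_eq, hB, convexHull_add, convexHull_singleton, add_right_comm]

end Aux4

section Aux5

lemma restr_lam_of_not_inf {J J₁ J₂ : Finset ℕ} {inf : ℕ} (hinf : inf ∉ J₁)
    (h12 : J₁ ⊆ J₂) (σ : Vec) : restr J₁ (lamMap J J₂ inf σ) = restr J₁ σ := by
  funext j
  by_cases hj : j ∈ J₁
  · have hne : j ≠ inf := fun h => hinf (h ▸ hj)
    simp [restr, lamMap, hj, hne, h12 hj]
  · simp [restr, hj]

lemma restr_lam_of_inf {J J₁ J₂ K₁ : Finset ℕ} {inf : ℕ} (hinf : inf ∈ J₁)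
    (h12 : J₁ ⊆ J₂) (hJK : J ⊆ K₁) (her : J₁.erase inf ⊆ K₁) (σ : Vec) :
    restr J₁ (lamMap J J₂ inf σ) = lamMap J J₁ inf (restr K₁ σ) := by
  funext j
  by_cases hj : j = inf
  · rw [hj]
    have hsum : ∀ i ∈ J, restr K₁ σ i = σ i := fun i hi => by
      simp [restr, hJK hi]
    have l1 : restr J₁ (lamMap J J₂ inf σ) inf = ∑ i ∈ J, σ i := by
      simp [restr, lamMap, hinf]
    have l2 : lamMap J J₁ inf (restr K₁ σ) inf = ∑ i ∈ J, restr K₁ σ i := by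
      simp [lamMap]
    rw [l1, l2, Finset.sum_congr rfl hsum]
  · by_cases hj1 : j ∈ J₁
    · have hjK : j ∈ K₁ := her (Finset.mem_erase.mpr ⟨hj, hj1⟩)
      simp [restr, lamMap, hj, hj1, h12 hj1, hjK]
    · simp [restr, lamMap, hj, hj1]

lemma restr_neg_eVec_not {J₁ : Finset ℕ} {inf : ℕ} (h : inf ∉ J₁) :
    restr J₁ (-eVec inf) = 0 := by
  funext j
  by_cases hj : j ∈ J₁
  · have hne : j ≠ inf := fun e => h (e ▸ hj)
    simp [restr, eVec, hj, hne]
  · simp [restr, hj]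

lemma restr_neg_eVec_mem {J₁ : Finset ℕ} {inf : ℕ} (h : inf ∈ J₁) :
    restr J₁ (-eVec inf) = -eVec inf := by
  funext j
  by_cases hj : j ∈ J₁
  · simp [restr, hj]
  · have hne : j ≠ inf := fun e => hj (e ▸ h)
    simp [restr, eVec, hj, hne]

lemma charΔ_compat (G : PolySys) {J J₁ J₂ : Finset ℕ} {inf : ℕ}
    (hstr : ∀ M ∈ G.F.H, inf ∉ M)
    (h₁ : J₁ ∈ blowupH G.F.H J inf) (h₂ : J₂ ∈ blowupH G.F.H J inf)
    (h12 : J₁ ⊆ J₂) :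
    charΔ G J inf J₁ = restr J₁ '' charΔ G J inf J₂ := by
  by_cases hm2 : inf ∈ J₂
  case neg =>
    have hm1 : inf ∉ J₁ := fun h => hm2 (h12 h)
    obtain ⟨hJ₂H, -⟩ := mem_blowupH_of_not_inf h₂ hm2
    obtain ⟨hJ₁H, -⟩ := mem_blowupH_of_not_inf h₁ hm1
    rw [charΔ, if_neg hm1, charΔ, if_neg hm2]
    have := G.compat J₁ hJ₁H J₂ hJ₂H h12
    rwa [restr_eq_fun] at this
  obtain ⟨hK₂H, hJK₂, her₂⟩ := blowdown_mem hstr h₂ hm2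
  set K₂ := blowdown J inf J₂ with hK₂def
  rw [charΔ_pos G hm2 hK₂H]
  have hrw : restr J₁ '' (lamMap J J₂ inf '' G.Δ K₂ + suppCone J₂ + {-eVec inf})
      = restr J₁ '' (lamMap J J₂ inf '' G.Δ K₂) + suppCone J₁
          + {restr J₁ (-eVec inf)} := by
    rw [← restrLin_coe, lin_image_add, lin_image_add, Set.image_singleton,
      restrLin_coe, restr_image_suppCone h12]
  by_cases hm1 : inf ∈ J₁
  · obtain ⟨hK₁H, hJK₁, her₁⟩ := blowdown_mem hstr h₁ hm1
    set K₁ := blowdown J inf J₁ with hK₁def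
    have hK12 : K₁ ⊆ K₂ := by
      rw [hK₁def, hK₂def, blowdown, if_pos hm1, blowdown, if_pos hm2]
      exact Finset.union_subset_union (Finset.erase_subset_erase _ h12) subset_rfl
    rw [charΔ_pos G hm1 hK₁H, hrw, restr_neg_eVec_mem hm1]
    congr 2
    rw [Set.image_image]
    have hcompat := G.compat K₁ hK₁H K₂ hK₂H hK12
    rw [restr_eq_fun] at hcompat
    calc lamMap J J₁ inf '' G.Δ K₁
        = lamMap J J₁ inf '' (restr K₁ '' G.Δ K₂) := by rw [← hcompat]
      _ = (fun σ => lamMap J J₁ inf (restr K₁ σ)) '' G.Δ K₂ := Set.image_image _ _ _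
      _ = (fun σ => restr J₁ (lamMap J J₂ inf σ)) '' G.Δ K₂ :=
          Set.image_congr fun σ _ => (restr_lam_of_inf hm1 h12 hJK₁ her₁ σ).symm
  · rw [charΔ, if_neg hm1, hrw, restr_neg_eVec_not hm1]
    obtain ⟨hJ₁H, -⟩ := mem_blowupH_of_not_inf h₁ hm1
    have hJ₁K₂ : J₁ ⊆ K₂ := by
      intro x hx
      have hxne : x ≠ inf := fun e => hm1 (e ▸ hx)
      exact her₂ (Finset.mem_erase.mpr ⟨hxne, h12 hx⟩)
    have h1 : restr J₁ '' (lamMap J J₂ inf '' G.Δ K₂) = G.Δ J₁ := by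
      rw [Set.image_image]
      have hcompat := G.compat J₁ hJ₁H K₂ hK₂H hJ₁K₂
      rw [restr_eq_fun] at hcompat
      calc (fun σ => restr J₁ (lamMap J J₂ inf σ)) '' G.Δ K₂
          = restr J₁ '' G.Δ K₂ :=
            Set.image_congr fun σ _ => restr_lam_of_not_inf hm1 h12 σ
        _ = G.Δ J₁ := hcompat.symm
    rw [h1, Set.singleton_zero, add_zero, (G.char J₁ hJ₁H).add_suppCone]

end Aux5

section Aux6

/-- The blow-up of a support fabric. -/
def buFabric (F : Fabric) (J : Finset ℕ) (hJ : J ∈ F.H) (inf : ℕ)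
    (hinf : inf ∉ F.I) : Fabric where
  I := insert inf F.I
  I_nonempty := Finset.insert_nonempty _ _
  H := blowupH F.H J inf
  mem_sub := by
    rintro J' (⟨hJ'H, -⟩ | ⟨K, ⟨hKH, hJK⟩, A, hA, rfl⟩)
    · exact (F.mem_sub J' hJ'H).trans (Finset.subset_insert _ _)
    · intro x hx
      simp only [Finset.mem_union, Finset.mem_sdiff, Finset.mem_singleton] at hx
      rcases hx with (⟨h1, -⟩ | h2) | rfl
      · exact Finset.mem_insert_of_mem (F.mem_sub K hKH h1)
      · exact Finset.mem_insert_of_mem (F.mem_sub K hKH (hJK (hA.subset h2)))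
      · exact Finset.mem_insert_self _ _
  downward := by
    rintro J' hJ' K' hK'
    rcases hJ' with ⟨hJ'H, hnsub⟩ | ⟨K, ⟨hKH, hJK⟩, A, hA, rfl⟩
    · exact Or.inl ⟨F.downward J' hJ'H K' hK', fun h => hnsub (h.trans hK')⟩
    · have hinfK : inf ∉ K := fun h => hinf (F.mem_sub K hKH h)
      by_cases hm : inf ∈ K'
      · refine Or.inr ⟨(K' ∩ (K \ J)) ∪ J, ⟨F.downward K hKH _ ?_,
          Finset.subset_union_right⟩, K' ∩ A, ?_, ?_⟩
        · exact Finset.union_subset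
            (Finset.inter_subset_right.trans (Finset.sdiff_subset)) hJK
        · exact Finset.ssubset_of_subset_of_ssubset Finset.inter_subset_right hA
        · ext x
          simp only [Finset.mem_union, Finset.mem_sdiff, Finset.mem_inter,
            Finset.mem_singleton]
          constructor
          · intro hx
            by_cases hxi : x = inf
            · exact Or.inr hxi
            · have := hK' hx
              simp only [Finset.mem_union, Finset.mem_sdiff,
                Finset.mem_singleton] at this
              rcases this with (⟨hxK, hxJ⟩ | hxA) | h
              · exact Or.inl (Or.inl ⟨Or.inl ⟨hx, hxK, hxJ⟩, hxJ⟩)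
              · exact Or.inl (Or.inr ⟨hx, hxA⟩)
              · exact absurd h hxi
          · rintro ((⟨h1 | h2, hnJ⟩ | ⟨h3, -⟩) | rfl)
            · exact h1.1
            · exact absurd h2 hnJ
            · exact h3
            · exact hm
      · refine Or.inl ⟨F.downward K hKH K' ?_, ?_⟩
        · intro x hx
          have := hK' hx
          simp only [Finset.mem_union, Finset.mem_sdiff,
            Finset.mem_singleton] at this
          rcases this with (⟨hxK, -⟩ | hxA) | h
          · exact hxK
          · exact hJK (hA.subset hxA)
          · exact absurd (h ▸ hx) hm
        · obtain ⟨a, haJ, hna⟩ := Finset.exists_of_ssubset hA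
          intro hsub
          have ha := hK' (hsub haJ)
          simp only [Finset.mem_union, Finset.mem_sdiff,
            Finset.mem_singleton] at ha
          rcases ha with (⟨-, hxJ⟩ | hxA) | h
          · exact hxJ haJ
          · exact hna hxA
          · exact hm (h ▸ hsub haJ)

lemma PolySys.hstr (G : PolySys) {inf : ℕ} (hinf : inf ∉ G.F.I) :
    ∀ M ∈ G.F.H, inf ∉ M :=
  fun M hM h => hinf (G.F.mem_sub M hM h)

/-- The characteristic transform as a polyhedra system. -/
noncomputable def buPoly (G : PolySys) (J : Finset ℕ) (inf : ℕ)
    (hJ : J ∈ Sing G) (hinf : inf ∉ G.F.I) : PolySys where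
  F := buFabric G.F J hJ.1 inf hinf
  d := G.d
  d_pos := G.d_pos
  Δ := charΔ G J inf
  char := fun _ hJ' => charΔ_isCharPoly G hJ (G.hstr hinf) hJ'
  nonempty := by
    intro J' hJ'
    by_cases hmem : inf ∈ J'
    · obtain ⟨hKH, -, -⟩ := blowdown_mem (G.hstr hinf) hJ' hmem
      obtain ⟨σ, hσ⟩ := G.nonempty _ hKH
      rw [charΔ_pos G hmem hKH]
      exact ⟨lamMap J J' inf σ + 0 + -eVec inf,
        Set.add_mem_add (Set.add_mem_add (Set.mem_image_of_mem _ hσ)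
          (zero_mem_suppCone J')) rfl⟩
    · rw [charΔ, if_neg hmem]
      exact G.nonempty J' (mem_blowupH_of_not_inf hJ' hmem).1
  compat := by
    intro J₁ h₁ J₂ h₂ h12
    rw [restr_eq_fun]
    exact charΔ_compat G (G.hstr hinf) h₁ h₂ h12

lemma buPoly_isCharTransformAt (G : PolySys) (J : Finset ℕ) (inf : ℕ)
    (hJ : J ∈ Sing G) (hinf : inf ∉ G.F.I) :
    IsCharTransformAt G (buPoly G J inf hJ hinf) J inf :=
  ⟨hJ, rfl, hinf, rfl, rfl, fun _ _ => rfl⟩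

end Aux6

section Aux7

/-- Relabelling of vectors along a permutation of `ℕ`. -/
noncomputable def mapVec (ρ : ℕ ≃ ℕ) (σ : Vec) : Vec := fun j => σ (ρ.symm j)

/-- Relabelling as a linear map. -/
noncomputable def mapLin (ρ : ℕ ≃ ℕ) : Vec →ₗ[ℝ] Vec where
  toFun := mapVec ρ
  map_add' _ _ := rfl
  map_smul' _ _ := rfl

lemma mapLin_coe (ρ : ℕ ≃ ℕ) : ⇑(mapLin ρ) = mapVec ρ := rfl

lemma mem_image_equiv {ρ : ℕ ≃ ℕ} {J : Finset ℕ} {j : ℕ} :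
    j ∈ J.image ρ ↔ ρ.symm j ∈ J := by
  constructor
  · rintro h
    obtain ⟨x, hx, rfl⟩ := Finset.mem_image.mp h
    simpa using hx
  · intro h
    exact Finset.mem_image.mpr ⟨ρ.symm j, h, by simp⟩

lemma mapVec_sum (ρ : ℕ ≃ ℕ) (J : Finset ℕ) (σ : Vec) :
    ∑ j ∈ J.image ρ, mapVec ρ σ j = ∑ j ∈ J, σ j := by
  rw [Finset.sum_image (fun x _ y _ h => ρ.injective h)]
  exact Finset.sum_congr rfl fun i _ => by simp [mapVec]

lemma mapVec_suppCone (ρ : ℕ ≃ ℕ) (J : Finset ℕ) :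
    mapVec ρ '' suppCone J = suppCone (J.image ρ) := by
  apply Set.Subset.antisymm
  · rintro _ ⟨σ, hσ, rfl⟩
    exact ⟨fun j => hσ.1 _, fun j hj => hσ.2 _ fun h => hj (mem_image_equiv.mpr h)⟩
  · intro σ hσ
    refine ⟨mapVec ρ.symm σ, ⟨fun j => hσ.1 _, fun j hj => ?_⟩, ?_⟩
    · exact hσ.2 _ fun h => hj (by simpa [mem_image_equiv] using h)
    · funext j; simp [mapVec]

lemma mapVec_posHull (ρ : ℕ ≃ ℕ) (J : Finset ℕ) (S : Set Vec) :
    mapVec ρ '' posHull J S = posHull (J.image ρ) (mapVec ρ '' S) := by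
  rw [posHull_eq, posHull_eq, ← mapLin_coe, lin_image_add,
    LinearMap.image_convexHull, mapLin_coe, mapVec_suppCone]

lemma mapVec_eVec (ρ : ℕ ≃ ℕ) (inf : ℕ) :
    mapVec ρ (eVec inf) = eVec (ρ inf) := by
  funext j
  by_cases h : j = ρ inf
  · simp [mapVec, eVec, h]
  · have h' : ρ.symm j ≠ inf := fun e => h (by rw [← e]; simp)
    simp [mapVec, eVec, h, h']

lemma mapVec_lamMap (ρ : ℕ ≃ ℕ) (J J' : Finset ℕ) (inf : ℕ) (σ : Vec) :
    mapVec ρ (lamMap J J' inf σ)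
      = lamMap (J.image ρ) (J'.image ρ) (ρ inf) (mapVec ρ σ) := by
  funext j
  by_cases h : j = ρ inf
  · have h' : ρ.symm j = inf := by rw [h]; simp
    have l1 : mapVec ρ (lamMap J J' inf σ) j = ∑ i ∈ J, σ i := by
      simp [mapVec, lamMap, h']
    have l2 : lamMap (J.image ρ) (J'.image ρ) (ρ inf) (mapVec ρ σ) j
        = ∑ i ∈ J.image ρ, mapVec ρ σ i := by simp [lamMap, h]
    rw [l1, l2, mapVec_sum]
  · have h' : ρ.symm j ≠ inf := fun e => h (by rw [← e]; simp)
    by_cases hj : ρ.symm j ∈ J'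
    · have hj2 : j ∈ J'.image ρ := mem_image_equiv.mpr hj
      simp [mapVec, lamMap, h, h', hj, hj2]
    · have hj2 : j ∉ J'.image ρ := fun hh => hj (mem_image_equiv.mp hh)
      simp [mapVec, lamMap, h, h', hj, hj2]

lemma contactExp_map (ρ : ℕ ≃ ℕ) (J : Finset ℕ) (Δ : Set Vec) :
    contactExp (J.image ρ) (mapVec ρ '' Δ) = contactExp J Δ := by
  by_cases h : J = ∅
  · subst h; simp [contactExp]
  · have h' : J.image ρ ≠ ∅ := by simpa using h
    rw [contactExp, contactExp, if_neg h, if_neg h']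
    congr 1
    rw [Set.image_image]
    exact Set.image_congr fun σ _ => mapVec_sum ρ J σ

lemma mapVec_agree {ρ ρ' : ℕ ≃ ℕ} {K : Finset ℕ}
    (hag : ∀ x ∈ K, ρ x = ρ' x) {σ : Vec} (hσ : σ ∈ suppCone K) :
    mapVec ρ σ = mapVec ρ' σ := by
  funext j
  by_cases h : ρ.symm j ∈ K
  · have e1 : ρ' (ρ.symm j) = j := by rw [← hag _ h]; simp
    have e2 : ρ'.symm j = ρ.symm j := (Equiv.symm_apply_eq ρ').mpr e1.symm
    simp [mapVec, e2]
  · by_cases h' : ρ'.symm j ∈ K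
    · have e1 : ρ (ρ'.symm j) = j := by rw [hag _ h']; simp
      have e2 : ρ.symm j = ρ'.symm j := (Equiv.symm_apply_eq ρ).mpr e1.symm
      exact absurd (by rw [e2]; exact h') h
    · simp [mapVec, hσ.2 _ h, hσ.2 _ h']

lemma image_ssubset {ρ : ℕ ≃ ℕ} {A J : Finset ℕ} (h : A ⊂ J) :
    A.image ρ ⊂ J.image ρ := by
  rw [Finset.ssubset_def] at h ⊢
  rw [Finset.image_subset_image_iff ρ.injective,
    Finset.image_subset_image_iff ρ.injective]
  exact h

lemma blowupH_map (ρ : ℕ ≃ ℕ) (H : Set (Finset ℕ)) (J : Finset ℕ) (inf : ℕ) :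
    (fun K => Finset.image ρ K) '' blowupH H J inf
      = blowupH ((fun K => Finset.image ρ K) '' H) (J.image ρ) (ρ inf) := by
  apply Set.Subset.antisymm
  · rintro _ ⟨J', hJ', rfl⟩
    rcases hJ' with ⟨h1, h2⟩ | ⟨K, ⟨hK, hJK⟩, A, hA, rfl⟩
    · exact Or.inl ⟨⟨J', h1, rfl⟩,
        fun h => h2 ((Finset.image_subset_image_iff ρ.injective).mp h)⟩
    · refine Or.inr ⟨K.image ρ, ⟨⟨K, hK, rfl⟩,
        (Finset.image_subset_image_iff ρ.injective).mpr hJK⟩,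
        A.image ρ, image_ssubset hA, ?_⟩
      simp [Finset.image_union, Finset.image_sdiff _ _ ρ.injective]
  · rintro J'' h
    rcases h with ⟨⟨J', hJ', rfl⟩, h2⟩ | ⟨K'', ⟨⟨K, hK, rfl⟩, hJK⟩, A'', hA'', rfl⟩
    · exact ⟨J', Or.inl ⟨hJ',
        fun h => h2 ((Finset.image_subset_image_iff ρ.injective).mpr h)⟩, rfl⟩
    · have hsymm : (A''.image ρ.symm).image ρ = A'' := by
        rw [Finset.image_image]
        simp
      refine ⟨(K \ J) ∪ A''.image ρ.symm ∪ {inf},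
        Or.inr ⟨K, ⟨hK, (Finset.image_subset_image_iff ρ.injective).mp hJK⟩,
          A''.image ρ.symm, ?_, rfl⟩, ?_⟩
      · have := image_ssubset (ρ := ρ.symm) hA''
        rwa [Finset.image_image, show (⇑ρ.symm ∘ ⇑ρ) = id by funext x; simp,
          Finset.image_id] at this
      · simp [Finset.image_union, Finset.image_sdiff _ _ ρ.injective, hsymm]

end Aux7

section Aux8

lemma comp_comparable {S : Set (Finset ℕ)} {J K : Finset ℕ} (hJ : J ∈ S)
    (hK : K ∈ S) (h : J ⊆ K) :
    connectedComponentIn S J = connectedComponentIn S K := by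
  have hcl : K ∈ closure ({J} : Set (Finset ℕ)) := by
    rw [mem_closure_iff]
    intro o ho hKo
    exact ⟨J, ho K hKo J h, rfl⟩
  have hpc : IsPreconnected ({J, K} : Set (Finset ℕ)) := by
    refine IsPreconnected.subset_closure (isPreconnected_singleton (x := J)) ?_ ?_
    · exact Set.singleton_subset_iff.mpr (Set.mem_insert _ _)
    · rintro z (rfl | rfl)
      · exact subset_closure rfl
      · exact hcl
  have hKmem : K ∈ connectedComponentIn S J := by
    refine hpc.subset_connectedComponentIn (Set.mem_insert _ _) ?_ ?_
    · rintro z (rfl | rfl) <;> assumption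
    · exact Set.mem_insert_of_mem _ rfl
  exact connectedComponentIn_eq hKmem

lemma comp_diff {S : Set (Finset ℕ)} {x y : Finset ℕ} (hy : y ∈ S)
    (hxy : y ∉ connectedComponentIn S x) :
    connectedComponentIn (S \ connectedComponentIn S x) y
      = connectedComponentIn S y := by
  apply Set.Subset.antisymm
  · exact isPreconnected_connectedComponentIn.subset_connectedComponentIn
      (mem_connectedComponentIn ⟨hy, hxy⟩)
      ((connectedComponentIn_subset _ _).trans Set.diff_subset)
  · refine isPreconnected_connectedComponentIn.subset_connectedComponentIn
      (mem_connectedComponentIn hy) ?_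
    intro z hz
    refine ⟨connectedComponentIn_subset _ _ hz, fun hzx => ?_⟩
    have h1 := connectedComponentIn_eq hz
    have h2 := connectedComponentIn_eq hzx
    have hmem : y ∈ connectedComponentIn S y := mem_connectedComponentIn hy
    rw [h1, ← h2] at hmem
    exact hxy hmem

lemma hasReduction_cons {E E₂ : PolySys} {J : Finset ℕ}
    (h : IsCharTransform E E₂ J) (h₂ : HasReduction E₂) : HasReduction E := by
  obtain ⟨k, seq, h0, hstep, hend⟩ := h₂
  refine ⟨k + 1, fun i => match i with | 0 => E | (j+1) => seq j, rfl, ?_, hend⟩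
  intro i hi
  match i with
  | 0 => exact ⟨J, by show IsCharTransform E (seq 0) J; rw [h0]; exact h⟩
  | (j+1) => exact hstep j (by omega)

lemma sing_finite (G : PolySys) : (Sing G).Finite := by
  apply Set.Finite.subset (G.F.I.powerset.finite_toSet)
  intro J hJ
  exact Finset.mem_coe.mpr (Finset.mem_powerset.mpr (G.F.mem_sub J hJ.1))

end Aux8

section Aux9

/-- The invariant carried along the lifting of a reduction of `Red_C(D)`. -/
def PhaseInv (G : PolySys) (C : Set (Finset ℕ)) (E G' : PolySys) (ρ : ℕ ≃ ℕ) :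
    Prop :=
  G'.d = G.d ∧
  (∀ M ∈ E.F.H, M.image ρ ∈ G'.F.H) ∧
  (∀ M ∈ E.F.H, G'.Δ (M.image ρ) = mapVec ρ '' (E.Δ M)) ∧
  Finset.image ρ E.F.I ⊆ G'.F.I ∧
  (∀ K ∈ G'.F.H, (¬ ∃ M ∈ E.F.H, K = M.image ρ) →
    K ∈ G.F.H ∧ G'.Δ K = G.Δ K ∧ K ∉ (G.red C).F.H) ∧
  (∀ M ∈ E.F.H, (M.image ρ : Finset ℕ) ⊆ G.F.I →
    M.image ρ ∈ (G.red C).F.H ∧ mapVec ρ '' (E.Δ M) = G.Δ (M.image ρ)) ∧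
  (∀ K ∈ Sing G \ C, K ∈ G'.F.H ∧ G'.Δ K = G.Δ K) ∧
  G.F.I ⊆ G'.F.I

lemma phase_step (G : PolySys) (C : Set (Finset ℕ))
    (hup : ∀ J ∈ C, ∀ K ∈ Sing G, J ⊆ K → K ∈ C)
    (hdown : ∀ K ∈ C, ∀ J ∈ Sing G, J ⊆ K → J ∈ C)
    (E E' G' : PolySys) (ρ : ℕ ≃ ℕ) (J : Finset ℕ) (inf : ℕ)
    (hinv : PhaseInv G C E G' ρ) (htr : IsCharTransformAt E E' J inf) :
    ∃ (G'' : PolySys) (ρ' : ℕ ≃ ℕ),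
      IsCharTransform G' G'' (J.image ρ) ∧ PhaseInv G C E' G'' ρ' := by
  obtain ⟨hJs, hdd, hinf, hIeq, hHeq, hΔeq⟩ := htr
  obtain ⟨hd, h3a, h3b, h2, h4, h5, h9, hI2⟩ := hinv
  obtain ⟨inf', hinf'⟩ := Infinite.exists_notMem_finset G'.F.I
  have hJH : J ∈ E.F.H := hJs.1
  have hJsub : J ⊆ E.F.I := E.F.mem_sub J hJH
  have hJstarS : J.image ρ ∈ Sing G' :=
    ⟨h3a J hJH, by rw [h3b J hJH, contactExp_map]; exact hJs.2⟩
  set ρ' : ℕ ≃ ℕ := ρ.trans (Equiv.swap (ρ inf) inf') with hρ'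
  have hρ'inf : ρ' inf = inf' := by
    simp [hρ', Equiv.swap_apply_left]
  have hagree : ∀ x ∈ E.F.I, ρ' x = ρ x := by
    intro x hx
    have hne1 : ρ x ≠ ρ inf := fun e => hinf (ρ.injective e ▸ hx)
    have hmem : ρ x ∈ Finset.image ρ E.F.I := Finset.mem_image_of_mem _ hx
    have hne2 : ρ x ≠ inf' := fun e => hinf' (h2 (e ▸ hmem))
    simp [hρ', Equiv.swap_apply_of_ne_of_ne hne1 hne2]
  have hagreeF : ∀ M : Finset ℕ, M ⊆ E.F.I → M.image ρ' = M.image ρ :=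
    fun M hM => Finset.image_congr fun x hx => hagree x (hM hx)
  have hagreeD : ∀ M ∈ E.F.H, mapVec ρ' '' (E.Δ M) = mapVec ρ '' (E.Δ M) :=
    fun M hM => Set.image_congr fun σ hσ =>
      mapVec_agree (fun x hx => (hagree x (E.F.mem_sub M hM hx)))
        (E.delta_supp hM hσ)
  have hstrE : ∀ M ∈ E.F.H, inf ∉ M := E.hstr hinf
  have hinf'G : inf' ∉ G.F.I := fun h => hinf' (hI2 h)
  have hJstarSingG : (J.image ρ : Finset ℕ) ⊆ G.F.I → J.image ρ ∈ Sing G := by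
    intro hsubI
    obtain ⟨hHC, hΔe⟩ := h5 J hJH hsubI
    obtain ⟨Mc, ⟨hMcC, hMcH⟩, hJMc⟩ := hHC
    exact ⟨G.F.downward Mc hMcH _ hJMc,
      by rw [← hΔe, contactExp_map]; exact hJs.2⟩
  have hJstarC : (J.image ρ : Finset ℕ) ⊆ G.F.I → J.image ρ ∈ C := by
    intro hsubI
    obtain ⟨hHC, -⟩ := h5 J hJH hsubI
    obtain ⟨Mc, ⟨hMcC, hMcH⟩, hJMc⟩ := hHC
    exact hdown Mc hMcC _ (hJstarSingG hsubI) hJMc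
  refine ⟨buPoly G' (J.image ρ) inf' hJstarS hinf', ρ',
    ⟨inf', buPoly_isCharTransformAt _ _ _ _ _⟩, hd, ?_, ?_, ?_, ?_, ?_, ?_, ?_⟩
  · -- (3a)
    intro M' hM'
    rw [hHeq] at hM'
    show M'.image ρ' ∈ blowupH G'.F.H (J.image ρ) inf'
    have hmem : M'.image ρ' ∈ blowupH ((fun K => Finset.image ρ' K) '' E.F.H)
        (J.image ρ') (ρ' inf) := by
      rw [← blowupH_map]
      exact ⟨M', hM', rfl⟩
    rw [hagreeF J hJsub, hρ'inf] at hmem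
    refine blowupH_subset_of_subset ?_ hmem
    rintro _ ⟨M, hM, rfl⟩
    show M.image ρ' ∈ G'.F.H
    rw [hagreeF M (E.F.mem_sub M hM)]
    exact h3a M hM
  · -- (3b)
    intro M' hM'
    have hM'mem := hM'
    rw [hHeq] at hM'
    rw [hΔeq M' hM'mem]
    by_cases hm : inf ∈ M'
    · have h1 : inf' ∈ M'.image ρ' := by
        rw [← hρ'inf]; exact Finset.mem_image_of_mem _ hm
      obtain ⟨hK₀H, hJK₀, -⟩ := blowdown_mem hstrE hM' hm
      have hK₀I : blowdown J inf M' ⊆ E.F.I := E.F.mem_sub _ hK₀H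
      have herase : (M'.image ρ').erase inf' = (M'.erase inf).image ρ' := by
        rw [← hρ'inf, ← Finset.image_erase ρ'.injective]
      have hbd' : blowdown J inf M' = (M'.erase inf) ∪ J := by
        rw [blowdown, if_pos hm]
      have hbd : blowdown (J.image ρ) inf' (M'.image ρ')
          = (blowdown J inf M').image ρ := by
        rw [blowdown, if_pos h1, herase, ← hagreeF J hJsub,
          ← Finset.image_union, ← hbd', hagreeF _ hK₀I]
      show charΔ G' (J.image ρ) inf' (M'.image ρ')
        = mapVec ρ' '' (charΔ E J inf M')
      rw [charΔ_pos G' h1 (by rw [hbd]; exact h3a _ hK₀H),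
        charΔ_pos E hm hK₀H, hbd, h3b _ hK₀H, ← hagreeD _ hK₀H,
        ← mapLin_coe ρ', lin_image_add, lin_image_add, Set.image_singleton,
        mapLin_coe, mapVec_suppCone]
      congr 1
      · congr 1
        rw [Set.image_image, Set.image_image]
        refine (Set.image_congr fun σ _ => ?_).symm
        rw [mapVec_lamMap ρ' J M' inf σ, hagreeF J hJsub, hρ'inf]
      · rw [show mapVec ρ' (-eVec inf) = -(mapVec ρ' (eVec inf)) from rfl,
          mapVec_eVec, hρ'inf]
    · have hm' : inf' ∉ M'.image ρ' := by
        intro h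
        obtain ⟨x, hx, he⟩ := Finset.mem_image.mp h
        have hxi : x = inf := ρ'.injective (by rw [he, hρ'inf])
        exact hm (hxi ▸ hx)
      obtain ⟨hM'E, hnsubJ⟩ := mem_blowupH_of_not_inf hM' hm
      show charΔ G' (J.image ρ) inf' (M'.image ρ')
        = mapVec ρ' '' (charΔ E J inf M')
      simp only [charΔ, if_neg hm', if_neg hm]
      rw [hagreeF M' (E.F.mem_sub M' hM'E), h3b M' hM'E, hagreeD M' hM'E]
  · -- (2)
    show Finset.image ρ' E'.F.I ⊆ insert inf' G'.F.I
    rw [hIeq, Finset.image_insert, hρ'inf, hagreeF E.F.I subset_rfl]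
    exact Finset.insert_subset_insert _ h2
  · -- (4)
    intro K hK hKnot
    rcases (hK : K ∈ blowupH G'.F.H (J.image ρ) inf') with
      ⟨hKG', hnsub⟩ | ⟨K₂, ⟨hK₂H, hXK₂⟩, A, hA, rfl⟩
    · have hKnotρ : ¬ ∃ M ∈ E.F.H, K = M.image ρ := by
        rintro ⟨M, hM, rfl⟩
        have hMJ : ¬ J ⊆ M := fun h => hnsub (Finset.image_subset_image h)
        refine hKnot ⟨M, ?_, ?_⟩
        · rw [hHeq]; exact Or.inl ⟨hM, hMJ⟩
        · rw [hagreeF M (E.F.mem_sub M hM)]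
      obtain ⟨hKGH, hKΔ, hKHC⟩ := h4 K hKG' hKnotρ
      have hKinf' : inf' ∉ K := fun h => hinf' (G'.F.mem_sub K hKG' h)
      refine ⟨hKGH, ?_, hKHC⟩
      show charΔ G' (J.image ρ) inf' K = G.Δ K
      rw [charΔ, if_neg hKinf']
      exact hKΔ
    · exfalso
      have hK₂img : ∃ M ∈ E.F.H, K₂ = M.image ρ := by
        by_contra hno
        obtain ⟨hK₂GH, -, hK₂HC⟩ := h4 K₂ hK₂H hno
        have hK₂I : K₂ ⊆ G.F.I := G.F.mem_sub K₂ hK₂GH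
        have hXC : J.image ρ ∈ C := hJstarC (hXK₂.trans hK₂I)
        have hXSing : J.image ρ ∈ Sing G := hJstarSingG (hXK₂.trans hK₂I)
        have hK₂Sing : K₂ ∈ Sing G := sing_mono G hXSing hK₂GH hXK₂
        exact hK₂HC ⟨K₂, ⟨hup _ hXC K₂ hK₂Sing hXK₂, hK₂GH⟩, subset_rfl⟩
      obtain ⟨M, hM, rfl⟩ := hK₂img
      have hJM : J ⊆ M := (Finset.image_subset_image_iff ρ.injective).mp hXK₂
      set A₀ := A.image ρ.symm with hA₀
      have hA₀J : A₀ ⊂ J := by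
        have := image_ssubset (ρ := ρ.symm) hA
        rwa [Finset.image_image, show (⇑ρ.symm ∘ ⇑ρ) = id by funext x; simp,
          Finset.image_id] at this
      have hA₀img : A₀.image ρ = A := by
        rw [hA₀, Finset.image_image]; simp
      refine hKnot ⟨(M \ J) ∪ A₀ ∪ {inf}, ?_, ?_⟩
      · rw [hHeq]; exact Or.inr ⟨M, ⟨hM, hJM⟩, A₀, hA₀J, rfl⟩
      · symm
        rw [Finset.image_union, Finset.image_union,
          Finset.image_sdiff _ _ ρ'.injective, Finset.image_singleton, hρ'inf,
          hagreeF M (E.F.mem_sub M hM), hagreeF J hJsub,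
          hagreeF A₀ (hA₀J.subset.trans hJsub), hA₀img]
  · -- (5)
    intro M' hM' hsubI
    have hM'mem := hM'
    rw [hHeq] at hM'
    have hm : inf ∉ M' := by
      intro h
      exact hinf'G (hsubI (by rw [← hρ'inf]; exact Finset.mem_image_of_mem _ h))
    obtain ⟨hM'E, -⟩ := mem_blowupH_of_not_inf hM' hm
    have himg : M'.image ρ' = M'.image ρ := hagreeF M' (E.F.mem_sub M' hM'E)
    rw [himg] at hsubI ⊢
    have hΔM : E'.Δ M' = E.Δ M' := by
      rw [hΔeq M' hM'mem, charΔ, if_neg hm]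
    rw [hΔM, hagreeD M' hM'E]
    exact h5 M' hM'E hsubI
  · -- (9)
    intro K hK
    obtain ⟨hKG', hKΔ⟩ := h9 K hK
    have hKGH : K ∈ G.F.H := hK.1.1
    have hKI : K ⊆ G.F.I := G.F.mem_sub K hKGH
    have hnsub : ¬ (J.image ρ) ⊆ K := by
      intro hsub
      exact hK.2 (hup _ (hJstarC (hsub.trans hKI)) K hK.1 hsub)
    refine ⟨Or.inl ⟨hKG', hnsub⟩, ?_⟩
    show charΔ G' (J.image ρ) inf' K = G.Δ K
    rw [charΔ, if_neg (fun h => hinf' (hI2 (hKI h))), hKΔ]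
  · -- (I2)
    exact hI2.trans (Finset.subset_insert _ _)

lemma phase (G E₀ : PolySys) (C : Set (Finset ℕ))
    (hup : ∀ J ∈ C, ∀ K ∈ Sing G, J ⊆ K → K ∈ C)
    (hdown : ∀ K ∈ C, ∀ J ∈ Sing G, J ⊆ K → J ∈ C)
    (hE₀H : E₀.F.H = (G.red C).F.H)
    (hE₀Δ : ∀ J ∈ E₀.F.H, E₀.Δ J = G.Δ J)
    (hE₀I : E₀.F.I ⊆ G.F.I)
    (hred : HasReduction E₀) :
    ∃ G' : PolySys, G'.d = G.d ∧ Sing G' = Sing G \ C ∧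
      (∀ K ∈ G'.F.H, K ⊆ G.F.I → K ∈ G.F.H ∧ G'.Δ K = G.Δ K) ∧
      G.F.I ⊆ G'.F.I ∧ (HasReduction G' → HasReduction G) := by
  obtain ⟨k, seq, h0, hstep, hend⟩ := hred
  have hHCsub : (G.red C).F.H ⊆ G.F.H := by
    rintro J' ⟨Jc, ⟨hJcC, hJcH⟩, hsub⟩
    exact G.F.downward Jc hJcH J' hsub
  have main : ∀ i, i ≤ k → ∃ (G' : PolySys) (ρ : ℕ ≃ ℕ),
      PhaseInv G C (seq i) G' ρ ∧ (HasReduction G' → HasReduction G) := by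
    intro i
    induction i with
    | zero =>
      intro _
      refine ⟨G, Equiv.refl ℕ, ?_, id⟩
      have himg : ∀ M : Finset ℕ, M.image (Equiv.refl ℕ) = M := fun M => by simp
      have hmv : ∀ S : Set Vec, mapVec (Equiv.refl ℕ) '' S = S := fun S => by
        have hid : mapVec (Equiv.refl ℕ) = id := by funext σ j; rfl
        rw [hid, Set.image_id]
      rw [h0]
      refine ⟨rfl, ?_, ?_, ?_, ?_, ?_, ?_, subset_rfl⟩
      · intro M hM; rw [himg]; exact hHCsub (hE₀H ▸ hM)
      · intro M hM; rw [himg, hmv]; exact (hE₀Δ M hM).symm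
      · rw [himg]; exact hE₀I
      · intro K hK hKnot
        exact ⟨hK, rfl, fun hKHC => hKnot ⟨K, hE₀H ▸ hKHC, (himg K).symm⟩⟩
      · intro M hM _
        rw [himg, hmv]
        exact ⟨hE₀H ▸ hM, hE₀Δ M hM⟩
      · intro K hK; exact ⟨hK.1.1, rfl⟩
    | succ i ihi =>
      intro hik
      obtain ⟨G', ρ, hinv, h6⟩ := ihi (by omega)
      obtain ⟨J, inf, htr⟩ := hstep i (by omega)
      obtain ⟨G'', ρ', htrans, hinv'⟩ :=
        phase_step G C hup hdown (seq i) (seq (i+1)) G' ρ J inf hinv htr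
      exact ⟨G'', ρ', hinv', fun h => h6 (hasReduction_cons htrans h)⟩
  obtain ⟨G', ρ, hinv, h6⟩ := main k le_rfl
  obtain ⟨hd, h3a, h3b, h2, h4, h5, h9, hI2⟩ := hinv
  refine ⟨G', hd, ?_, ?_, hI2, h6⟩
  · apply Set.Subset.antisymm
    · intro K hK
      by_cases hex : ∃ M ∈ (seq k).F.H, K = M.image ρ
      · obtain ⟨M, hM, rfl⟩ := hex
        exfalso
        have hMs : M ∈ Sing (seq k) := ⟨hM, by
          have h' := hK.2
          rwa [h3b M hM, contactExp_map] at h'⟩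
        rw [hend] at hMs
        exact hMs
      · obtain ⟨hKGH, hKΔ, hKHC⟩ := h4 K hK.1 hex
        exact ⟨⟨hKGH, by rw [← hKΔ]; exact hK.2⟩,
          fun hKC => hKHC ⟨K, ⟨hKC, hKGH⟩, subset_rfl⟩⟩
    · intro K hK
      obtain ⟨hKG', hKΔ⟩ := h9 K hK
      exact ⟨hKG', by rw [hKΔ]; exact hK.1.2⟩
  · intro K hKG' hKI
    by_cases hex : ∃ M ∈ (seq k).F.H, K = M.image ρ
    · obtain ⟨M, hM, rfl⟩ := hex
      obtain ⟨hHC, hΔe⟩ := h5 M hM hKI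
      exact ⟨hHCsub hHC, by rw [h3b M hM, hΔe]⟩
    · obtain ⟨hKGH, hKΔ, -⟩ := h4 K hKG' hex
      exact ⟨hKGH, hKΔ⟩

end Aux9

/-- Connected components decomposition: if each reduction `Red_C(D)` to a
connected component `C` of `Sing(D)` admits a reduction of singularities, then
so does `D`. -/
theorem connected_components_reduction (D : PolySys)
    (h : ∀ x ∈ Sing D, HasReduction (D.red (connectedComponentIn (Sing D) x))) :
    HasReduction D := by
  suffices hmain : ∀ n (G : PolySys), (Sing G).ncard ≤ n →
      (∀ x ∈ Sing G, ∃ E₀ : PolySys,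
        E₀.F.H = (G.red (connectedComponentIn (Sing G) x)).F.H ∧
        (∀ J ∈ E₀.F.H, E₀.Δ J = G.Δ J) ∧ E₀.F.I ⊆ G.F.I ∧ HasReduction E₀) →
      HasReduction G by
    exact hmain (Sing D).ncard D le_rfl
      (fun x hx => ⟨D.red _, rfl, fun _ _ => rfl, subset_rfl, h x hx⟩)
  intro n
  induction n with
  | zero =>
    intro G hcard _
    have hempty : Sing G = ∅ :=
      (Set.ncard_eq_zero (sing_finite G)).mp (Nat.le_zero.mp hcard)
    exact ⟨0, fun _ => G, rfl, fun i hi => absurd hi (by omega), hempty⟩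
  | succ n ih =>
    intro G hcard hhyp
    by_cases hempty : Sing G = ∅
    · exact ⟨0, fun _ => G, rfl, fun i hi => absurd hi (by omega), hempty⟩
    obtain ⟨x, hx⟩ := Set.nonempty_iff_ne_empty.mpr hempty
    set C := connectedComponentIn (Sing G) x with hCdef
    have hCsub : C ⊆ Sing G := connectedComponentIn_subset _ _
    have hxC : x ∈ C := mem_connectedComponentIn hx
    have hup : ∀ J ∈ C, ∀ K ∈ Sing G, J ⊆ K → K ∈ C := by
      intro J hJ K hK hJK
      have h1 : connectedComponentIn (Sing G) x = connectedComponentIn (Sing G) J :=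
        connectedComponentIn_eq hJ
      have h2 : connectedComponentIn (Sing G) J = connectedComponentIn (Sing G) K :=
        comp_comparable (hCsub hJ) hK hJK
      rw [hCdef, h1, h2]
      exact mem_connectedComponentIn hK
    have hdown : ∀ K ∈ C, ∀ J ∈ Sing G, J ⊆ K → J ∈ C := by
      intro K hK J hJ hJK
      have h1 : connectedComponentIn (Sing G) x = connectedComponentIn (Sing G) K :=
        connectedComponentIn_eq hK
      have h2 : connectedComponentIn (Sing G) J = connectedComponentIn (Sing G) K :=
        comp_comparable hJ (hCsub hK) hJK
      rw [hCdef, h1, ← h2]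
      exact mem_connectedComponentIn hJ
    obtain ⟨E₀, hH, hΔ, hI, hred⟩ := hhyp x hx
    obtain ⟨G', hd, hSing', huntouched, hII, himpl⟩ :=
      phase G E₀ C hup hdown hH hΔ hI hred
    apply himpl
    apply ih G'
    · have hss : Sing G \ C ⊂ Sing G :=
        ⟨Set.diff_subset, fun hsub => ((hsub hx).2 hxC)⟩
      have hlt := Set.ncard_lt_ncard hss (sing_finite G)
      rw [hSing']
      omega
    · intro y hy
      have hy' : y ∈ Sing G \ C := hSing' ▸ hy
      obtain ⟨E₀y, hHy, hΔy, hIy, hredy⟩ := hhyp y hy'.1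
      have hCy_sub_sing' : connectedComponentIn (Sing G) y ⊆ Sing G' := by
        intro z hz
        have hzS : z ∈ Sing G := connectedComponentIn_subset _ _ hz
        have hzC : z ∉ C := by
          intro hzC
          have e1 : connectedComponentIn (Sing G) x = connectedComponentIn (Sing G) z :=
            connectedComponentIn_eq hzC
          have e2 : connectedComponentIn (Sing G) y = connectedComponentIn (Sing G) z :=
            connectedComponentIn_eq hz
          exact hy'.2 (by rw [hCdef, e1, ← e2]; exact mem_connectedComponentIn hy'.1)
        rw [hSing']
        exact ⟨hzS, hzC⟩
      have hcomp : connectedComponentIn (Sing G') y = connectedComponentIn (Sing G) y := by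
        rw [hSing', hCdef]
        exact comp_diff hy'.1 hy'.2
      refine ⟨E₀y, ?_, ?_, hIy.trans hII, hredy⟩
      · rw [hcomp, hHy]
        ext J'
        constructor
        · rintro ⟨Jc, ⟨h1, _⟩, h3⟩
          exact ⟨Jc, ⟨h1, (hCy_sub_sing' h1).1⟩, h3⟩
        · rintro ⟨Jc, ⟨h1, _⟩, h3⟩
          exact ⟨Jc, ⟨h1, (connectedComponentIn_subset _ _ h1).1⟩, h3⟩
      · intro J hJ
        rw [hΔy J hJ]
        rw [hHy] at hJ
        obtain ⟨Jc, ⟨hJcCy, hJcGH⟩, hJJc⟩ := hJ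
        have hJG' : J ∈ G'.F.H :=
          G'.F.downward Jc (hCy_sub_sing' hJcCy).1 J hJJc
        have hJI : J ⊆ G.F.I := hJJc.trans (G.F.mem_sub Jc hJcGH)
        exact (huntouched J hJG' hJI).2.symm

end RedSing
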